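/- Let G be a finite simple graph and let S be a redundant identifying code of G. If v, w, u are distinct vertices with vw and wu edges of G (a path v–w–u) such that both u and w have degree 2, then v ∈ S. -/

import Mathlib

open scoped symmDiff

variable {V : Type*}

/-- The closed neighborhood of a vertex. -/
def closedNbhd (G : SimpleGraph V) (v : V) : Set V := insert v (G.neighborSet v)

/-- A vertex `v` is at least `k`-dominated by `S`. -/
def kDominated (G : SimpleGraph V) (S : Set V) (k : ℕ) (v : V) : Prop :=
  k ≤ (closedNbhd G v ∩ S).ncard

/-- Two vertices `u` and `v` are `k`-distinguished by `S`. -/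
def kDistinguished (G : SimpleGraph V) (S : Set V) (k : ℕ) (u v : V) : Prop :=
  k ≤ ((closedNbhd G u ∩ S) ∆ (closedNbhd G v ∩ S)).ncard

/-- `S` is an identifying code of `G`. -/
def IsIC (G : SimpleGraph V) (S : Set V) : Prop :=
  (∀ v, kDominated G S 1 v) ∧ ∀ u v, u ≠ v → kDistinguished G S 1 u v

/-- `S` is a redundant identifying code of `G`. -/
def IsRedIC (G : SimpleGraph V) (S : Set V) : Prop :=
  (∀ v, kDominated G S 2 v) ∧ ∀ u v, u ≠ v → kDistinguished G S 2 u v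

/-- The minimum cardinality of a redundant identifying code of `G`. -/
noncomputable def redIC (G : SimpleGraph V) : ℕ :=
  sInf {n | ∃ S : Set V, IsRedIC G S ∧ S.ncard = n}

/-- The degree of a vertex, as the cardinality of its open neighborhood. -/
noncomputable def deg (G : SimpleGraph V) (v : V) : ℕ := (G.neighborSet v).ncard

/-- A leaf is a vertex of degree 1. -/
def IsLeaf (G : SimpleGraph V) (v : V) : Prop := deg G v = 1

/-- A support vertex is a vertex adjacent to a leaf. -/
def IsSupport (G : SimpleGraph V) (v : V) : Prop := ∃ u, G.Adj v u ∧ IsLeaf G u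

/-- Two distinct vertices are closed twins if they have the same closed neighborhood. -/
def ClosedTwins (G : SimpleGraph V) (u v : V) : Prop :=
  u ≠ v ∧ closedNbhd G u = closedNbhd G v

theorem stmt_12 {V : Type*} [Fintype V] (G : SimpleGraph V) (S : Set V)
    (hS : IsRedIC G S) (v w u : V) (hvu : v ≠ u) (hvw : G.Adj v w) (hwu : G.Adj w u)
    (hw : deg G w = 2) (hu : deg G u = 2) : v ∈ S := by
  by_contra hvS
  have hwune : w ≠ u := hwu.ne
  -- neighborSet w = {v, u}
  have hsub : ({v, u} : Set V) ⊆ G.neighborSet w := by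
    intro x hx
    rcases hx with rfl | rfl
    · exact hvw.symm
    · exact hwu
  have hNw : ({v, u} : Set V) = G.neighborSet w :=
    Set.eq_of_subset_of_ncard_le hsub (by rw [show (G.neighborSet w).ncard = 2 from hw,
      Set.ncard_pair hvu]) (Set.toFinite _)
  -- 2-domination of w forces w, u ∈ S
  have hdomw : 2 ≤ (closedNbhd G w ∩ S).ncard := hS.1 w
  have hsub2 : closedNbhd G w ∩ S ⊆ ({w, u} : Set V) := by
    intro x hx
    obtain ⟨hx1, hx2⟩ := hx
    rcases hx1 with rfl | hx1
    · exact Or.inl rfl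
    · rw [← hNw] at hx1
      rcases hx1 with rfl | rfl
      · exact absurd hx2 hvS
      · exact Or.inr rfl
  have heq : closedNbhd G w ∩ S = ({w, u} : Set V) :=
    Set.eq_of_subset_of_ncard_le hsub2 (by rw [Set.ncard_pair hwune]; exact hdomw)
      (Set.toFinite _)
  -- {w, u} ⊆ N[u] ∩ S
  have hwS : w ∈ S := by
    have : w ∈ closedNbhd G w ∩ S := heq ▸ (by exact Or.inl rfl)
    exact this.2
  have huS : u ∈ S := by
    have : u ∈ closedNbhd G w ∩ S := heq ▸ (by exact Or.inr rfl)
    exact this.2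
  have hle : closedNbhd G w ∩ S ⊆ closedNbhd G u ∩ S := by
    rw [heq]
    intro x hx
    rcases hx with rfl | rfl
    · exact ⟨Or.inr hwu.symm, hwS⟩
    · exact ⟨Or.inl rfl, huS⟩
  have hdist : 2 ≤ ((closedNbhd G w ∩ S) ∆ (closedNbhd G u ∩ S)).ncard := hS.2 w u hwune
  rw [symmDiff_of_le hle] at hdist
  have hsub3 : (closedNbhd G u ∩ S) \ (closedNbhd G w ∩ S) ⊆ G.neighborSet u \ {w} := by
    rw [heq]
    rintro x ⟨⟨hx1, _⟩, hx2⟩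
    simp only [Set.mem_insert_iff, not_or, Set.mem_singleton_iff] at hx2
    rcases hx1 with rfl | hx1
    · exact absurd rfl hx2.2
    · exact ⟨hx1, hx2.1⟩
  have hcard : (G.neighborSet u \ {w}).ncard = 1 := by
    have := Set.ncard_diff_singleton_of_mem (s := G.neighborSet u) hwu.symm
    rw [this, show (G.neighborSet u).ncard = 2 from hu]
  have := le_trans hdist (Set.ncard_le_ncard hsub3 (Set.toFinite _))
  omega
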